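/- arXiv:2302.02004 — 4 statements merged into one kernel-verified Lean document; each statement's English description precedes it below -/
import Mathlib

section
/- Let A : L²_π(X) → L²_π(X) be a compact self-adjoint bounded linear operator with eigenvalues (μ_j) and let r ∈ ℕ. Then for every Hilbert–Schmidt operator Ĝ : H → H of rank at most r and every eigenpair (λ̂_i, ψ̂_i) of Ĝ with λ̂_i ≠ 0 and S ψ̂_i ≠ 0, the distance from λ̂_i to its closest eigenvalue μ_{j(i)} of A satisfies |λ̂_i − μ_{j(i)}| ≤ η(ψ̂_i) · E(Ĝ). -/
open MeasureTheory ContinuousLinearMap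
open scoped RealInnerProductSpace ENNReal NNReal

noncomputable section

/-- The `j`-th singular value (`j ≥ 1`, in decreasing order) of a bounded operator,
defined via approximation numbers: `σ_j(B) = inf {‖B - F‖ : rank F < j}`
(for compact operators between Hilbert spaces this coincides with the usual
singular values). -/
def sval {H E : Type*} [NormedAddCommGroup H] [NormedAddCommGroup E]
    [NormedSpace ℝ H] [NormedSpace ℝ E] (B : H →L[ℝ] E) (j : ℕ) : ℝ :=
  sInf {t : ℝ | ∃ F : H →L[ℝ] E,
    Module.rank ℝ (LinearMap.range (F : H →ₗ[ℝ] E)) < (j : Cardinal) ∧ t = ‖B - F‖}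

/-- `Rt` is an `r`-truncated SVD of `B`: `Rt = B ∘ P` for an orthogonal projection `P`
of rank at most `r` achieving the optimal rank-`r` approximation error `σ_{r+1}(B)`. -/
def IsTruncSVD {H E : Type*} [NormedAddCommGroup H] [InnerProductSpace ℝ H] [CompleteSpace H]
    [NormedAddCommGroup E] [NormedSpace ℝ E]
    (B : H →L[ℝ] E) (r : ℕ) (Rt : H →L[ℝ] E) : Prop :=
  ∃ P : H →L[ℝ] H, IsSelfAdjoint P ∧ P ∘L P = P ∧
    Module.rank ℝ (LinearMap.range (P : H →ₗ[ℝ] H)) ≤ (r : Cardinal) ∧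
    Rt = B ∘L P ∧ ‖B - Rt‖ = sval B (r + 1)

/-- The rank-one operator `a ⊗ b : h ↦ ⟪a, h⟫ • b`. -/
def rankOne {H : Type*} [NormedAddCommGroup H] [InnerProductSpace ℝ H] (a b : H) :
    H →L[ℝ] H :=
  (innerSL ℝ a).smulRight b

/-- The empirical covariance operator `Ĉ = (1/n) ∑ᵢ φ(xᵢ) ⊗ φ(xᵢ)` of the dataset `D`. -/
def empCov {X H : Type*} [NormedAddCommGroup H] [InnerProductSpace ℝ H] (φ : X → H)
    (n : ℕ) (D : Fin n → X × X) : H →L[ℝ] H :=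
  (n : ℝ)⁻¹ • ∑ i, rankOne (φ (D i).1) (φ (D i).1)

/-- The empirical cross-covariance operator `Ĉ_XY = (1/n) ∑ᵢ φ(xᵢ) ⊗ φ(yᵢ)`. -/
def empCrossCov {X H : Type*} [NormedAddCommGroup H] [InnerProductSpace ℝ H] (φ : X → H)
    (n : ℕ) (D : Fin n → X × X) : H →L[ℝ] H :=
  (n : ℝ)⁻¹ • ∑ i, rankOne (φ (D i).1) (φ (D i).2)

section AuxEigen

open Filter Topology

set_option linter.unusedSectionVars false


variable {E : Type*} [NormedAddCommGroup E] [InnerProductSpace ℝ E] [CompleteSpace E]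

private lemma subseq_of_compact' (T : E →L[ℝ] E) (hT : IsCompactOperator (T : E → E))
    (x : ℕ → E) (hx : ∀ n, ‖x n‖ ≤ 1) :
    ∃ y : E, ∃ φ : ℕ → ℕ, StrictMono φ ∧
      Tendsto (fun n => T (x (φ n))) atTop (𝓝 y) := by
  obtain ⟨K, hK, hTK⟩ := hT
  obtain ⟨ε, hε, hball⟩ := Metric.mem_nhds_iff.mp hTK
  have hmem : ∀ n, T ((ε / 2) • x n) ∈ K := by
    intro n
    apply hball
    rw [Metric.mem_ball, dist_zero_right, norm_smul, Real.norm_eq_abs,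
      abs_of_pos (by linarith : (0:ℝ) < ε / 2)]
    nlinarith [hx n, norm_nonneg (x n)]
  obtain ⟨a, _, φ, hφ, ha⟩ := hK.tendsto_subseq hmem
  refine ⟨(ε / 2)⁻¹ • a, φ, hφ, ?_⟩
  have h2 : Tendsto (fun n => (ε / 2)⁻¹ • T ((ε / 2) • x (φ n))) atTop
      (𝓝 ((ε / 2)⁻¹ • a)) := ha.const_smul _
  convert h2 using 2 with n
  rw [T.map_smul, smul_smul, inv_mul_cancel₀ (by linarith : (ε:ℝ)/2 ≠ 0), one_smul]

set_option maxHeartbeats 1000000 in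
private lemma exists_eigenvector_in' (T : E →L[ℝ] E) (hTc : IsCompactOperator (T : E → E))
    (hTsa : IsSelfAdjoint T) (C : Submodule ℝ E) (hCc : IsClosed (C : Set E))
    (hCi : ∀ x ∈ C, T x ∈ C) {v : E} (hv : v ∈ C) (hv0 : v ≠ 0) :
    ∃ c : ℝ, ∃ w : E, w ∈ C ∧ w ≠ 0 ∧ T w = c • w := by
  classical
  set Sset : Set ℝ := {t : ℝ | ∃ x, x ∈ C ∧ ‖x‖ ≤ 1 ∧ t = ‖T x‖} with hSset
  have hSne : Sset.Nonempty := ⟨‖T 0‖, 0, C.zero_mem, by simp, rfl⟩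
  have hSbdd : BddAbove Sset := by
    refine ⟨‖T‖, ?_⟩
    rintro t ⟨y, hy, hy1, rfl⟩
    calc ‖T y‖ ≤ ‖T‖ * ‖y‖ := T.le_opNorm y
    _ ≤ ‖T‖ * 1 := by nlinarith [norm_nonneg T]
    _ = ‖T‖ := mul_one _
  set M0 : ℝ := sSup Sset with hM0
  have hM0nn : 0 ≤ M0 := by
    have : (0:ℝ) ∈ Sset := ⟨0, C.zero_mem, by simp, by simp⟩
    exact le_csSup hSbdd this
  have hbound : ∀ y ∈ C, ‖T y‖ ≤ M0 * ‖y‖ := by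
    intro y hy
    rcases eq_or_ne y 0 with rfl | hy0
    · simp
    · have hyn : (0:ℝ) < ‖y‖ := norm_pos_iff.mpr hy0
      have hmem : ‖T (‖y‖⁻¹ • y)‖ ∈ Sset :=
        ⟨‖y‖⁻¹ • y, C.smul_mem _ hy, by
          rw [norm_smul, Real.norm_eq_abs, abs_of_pos (by positivity)]
          rw [inv_mul_cancel₀ hyn.ne'], rfl⟩
      have h1 : ‖T (‖y‖⁻¹ • y)‖ ≤ M0 := le_csSup hSbdd hmem
      rw [T.map_smul, norm_smul, Real.norm_eq_abs, abs_of_pos (by positivity)] at h1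
      calc ‖T y‖ = ‖y‖ * (‖y‖⁻¹ * ‖T y‖) := by field_simp
      _ ≤ ‖y‖ * M0 := by nlinarith
      _ = M0 * ‖y‖ := mul_comm _ _
  rcases eq_or_lt_of_le hM0nn with hM0z | hM0pos
  · -- M0 = 0 : T v = 0
    refine ⟨0, v, hv, hv0, ?_⟩
    have := hbound v hv
    rw [← hM0z] at this
    simp only [zero_mul] at this
    have : T v = 0 := norm_le_zero_iff.mp this
    simp [this]
  · -- M0 > 0
    set M : ℝ := M0 ^ 2 with hM
    have hMpos : 0 < M := by positivity
    -- approximating sequence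
    have hex : ∀ n : ℕ, ∃ x, x ∈ C ∧ ‖x‖ ≤ 1 ∧ M0 - 1 / (n + 1) < ‖T x‖ := by
      intro n
      have hlt : M0 - 1 / (n + 1) < M0 := by
        have : (0:ℝ) < 1 / (n + 1) := by positivity
        linarith
      obtain ⟨t, ht, hlt'⟩ := exists_lt_of_lt_csSup hSne hlt
      obtain ⟨x, hxC, hx1, rfl⟩ := ht
      exact ⟨x, hxC, hx1, hlt'⟩
    choose x hxC hx1 hxlt using hex
    have hxle : ∀ n, ‖T (x n)‖ ≤ M0 := fun n => by
      calc ‖T (x n)‖ ≤ M0 * ‖x n‖ := hbound _ (hxC n)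
      _ ≤ M0 * 1 := by nlinarith [hx1 n, norm_nonneg (x n)]
      _ = M0 := mul_one _
    have hTtend : Tendsto (fun n => ‖T (x n)‖) atTop (𝓝 M0) := by
      have hlow : Tendsto (fun n : ℕ => M0 - 1 / (n + 1)) atTop (𝓝 (M0 - 0)) :=
        tendsto_const_nhds.sub tendsto_one_div_add_atTop_nhds_zero_nat
      rw [sub_zero] at hlow
      exact tendsto_of_tendsto_of_tendsto_of_le_of_le hlow tendsto_const_nhds
        (fun n => (hxlt n).le) hxle
    -- key inequality
    have hkey : ∀ n, ‖T (T (x n)) - M • x n‖ ^ 2 ≤ M ^ 2 - M * (‖T (x n)‖ * ‖T (x n)‖) := by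
      intro n
      have hsym : ⟪T (T (x n)), x n⟫ = ‖T (x n)‖ ^ 2 := by
        have := hTsa.isSymmetric (T (x n)) (x n)
        simp only [ContinuousLinearMap.coe_coe] at this
        rw [this, real_inner_self_eq_norm_sq]
      have expand : ‖T (T (x n)) - M • x n‖ ^ 2 =
          ‖T (T (x n))‖ ^ 2 - 2 * (M * ‖T (x n)‖ ^ 2) + M ^ 2 * ‖x n‖ ^ 2 := by
        rw [norm_sub_sq_real, real_inner_smul_right, hsym, norm_smul, Real.norm_eq_abs,
          abs_of_pos hMpos]
        ring
      have h1 : ‖T (T (x n))‖ ≤ M0 * ‖T (x n)‖ := hbound _ (hCi _ (hxC n))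
      have h1sq : ‖T (T (x n))‖ ^ 2 ≤ (M0 * ‖T (x n)‖) ^ 2 :=
        pow_le_pow_left₀ (norm_nonneg _) h1 2
      have hxsq : ‖x n‖ ^ 2 ≤ 1 := by nlinarith [hx1 n, norm_nonneg (x n)]
      have hMsq : M ^ 2 * ‖x n‖ ^ 2 ≤ M ^ 2 :=
        by nlinarith [sq_nonneg M]
      rw [expand]
      have : (M0 * ‖T (x n)‖) ^ 2 = M * (‖T (x n)‖ * ‖T (x n)‖) := by rw [hM]; ring
      nlinarith [h1sq, hMsq]
    -- the residual tends to zero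
    have hres : Tendsto (fun n => T (T (x n)) - M • x n) atTop (𝓝 0) := by
      rw [tendsto_zero_iff_norm_tendsto_zero]
      have hb : Tendsto (fun n => M ^ 2 - M * (‖T (x n)‖ * ‖T (x n)‖)) atTop
          (𝓝 (M ^ 2 - M * (M0 * M0))) :=
        tendsto_const_nhds.sub (tendsto_const_nhds.mul (hTtend.mul hTtend))
      have hbz : M ^ 2 - M * (M0 * M0) = 0 := by rw [hM]; ring
      rw [hbz] at hb
      have hsq2 : Tendsto (fun n => ‖T (T (x n)) - M • x n‖ ^ 2) atTop (𝓝 0) :=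
        tendsto_of_tendsto_of_tendsto_of_le_of_le tendsto_const_nhds hb
          (fun n => sq_nonneg _) hkey
      have := hsq2.sqrt
      rw [Real.sqrt_zero] at this
      convert this using 2 with n
      rw [Real.sqrt_sq (norm_nonneg _)]
    -- extract convergent subsequence
    obtain ⟨z, φ, hφ, hz⟩ := subseq_of_compact' T hTc x hx1
    have hT2 : Tendsto (fun n => T (T (x (φ n)))) atTop (𝓝 (T z)) :=
      (T.continuous.tendsto z).comp hz
    have hresφ : Tendsto (fun n => T (T (x (φ n))) - M • x (φ n)) atTop (𝓝 0) :=
      hres.comp hφ.tendsto_atTop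
    have hMx : Tendsto (fun n => M • x (φ n)) atTop (𝓝 (T z)) := by
      have := hT2.sub hresφ
      rw [sub_zero] at this
      convert this using 2 with n
      abel
    obtain ⟨u, hu⟩ : ∃ w : E, w = M⁻¹ • T z := ⟨_, rfl⟩
    have hxlim : Tendsto (fun n => x (φ n)) atTop (𝓝 u) := by
      have := hMx.const_smul M⁻¹
      convert this using 2 with n
      rw [smul_smul, inv_mul_cancel₀ hMpos.ne', one_smul]
    have huC : u ∈ C := hCc.mem_of_tendsto hxlim (Eventually.of_forall fun n => hxC _)
    have hTu : Tendsto (fun n => T (x (φ n))) atTop (𝓝 (T u)) :=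
      (T.continuous.tendsto u).comp hxlim
    have hzTu : z = T u := tendsto_nhds_unique hz hTu
    have hnTu : ‖T u‖ = M0 :=
      tendsto_nhds_unique hTu.norm (hTtend.comp hφ.tendsto_atTop)
    have hu0 : u ≠ 0 := by
      intro h
      rw [h, map_zero, norm_zero] at hnTu
      exact hM0pos.ne hnTu
    have hT2u : T (T u) = M • u := by
      rw [← hzTu, hu, smul_smul, mul_inv_cancel₀ hMpos.ne', one_smul]
    by_cases hw : T u + M0 • u = 0
    · refine ⟨-M0, u, huC, hu0, ?_⟩
      have : T u = -(M0 • u) := by linear_combination (norm := abel_nf) hw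
      rw [this, neg_smul]
    · refine ⟨M0, T u + M0 • u, C.add_mem (hCi u huC) (C.smul_mem _ huC), hw, ?_⟩
      have h5 : T (T u + M0 • u) = M • u + M0 • T u := by
        rw [map_add, T.map_smul, hT2u]
      rw [h5, smul_add, smul_smul, hM, pow_two]
      abel

private lemma orthogonal_iSup_eigenspaces_eq_bot' (T : E →L[ℝ] E)
    (hTc : IsCompactOperator (T : E → E)) (hTsa : IsSelfAdjoint T) :
    (⨆ μ : ℝ, Module.End.eigenspace (T : E →ₗ[ℝ] E) μ)ᗮ = ⊥ := by
  by_contra h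
  obtain ⟨v, hv, hv0⟩ := Submodule.exists_mem_ne_zero_of_ne_bot h
  obtain ⟨c, w, hwC, hw0, hTw⟩ := exists_eigenvector_in' T hTc hTsa _
    (Submodule.isClosed_orthogonal _)
    (fun x hx => hTsa.isSymmetric.orthogonalComplement_iSup_eigenspaces_invariant hx)
    hv hv0
  have hwE : w ∈ ⨆ μ : ℝ, Module.End.eigenspace (T : E →ₗ[ℝ] E) μ := by
    refine Submodule.mem_iSup_of_mem c ?_
    rw [Module.End.mem_eigenspace_iff]
    simpa using hTw
  have : (⟪w, w⟫ : ℝ) = 0 := Submodule.inner_left_of_mem_orthogonal hwE hwC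
  exact hw0 ((inner_self_eq_zero (𝕜 := ℝ)).mp this)

set_option maxHeartbeats 1000000 in
private lemma lower_bound' (T : E →L[ℝ] E)
    (hTc : IsCompactOperator (T : E → E)) (hTsa : IsSelfAdjoint T)
    (lam d : ℝ) (hd : 0 ≤ d)
    (hcl : ∀ μ' : ℝ, (∃ f : E, f ≠ 0 ∧ T f = μ' • f) → d ≤ |lam - μ'|) (x : E) :
    d * ‖x‖ ≤ ‖T x - lam • x‖ := by
  classical
  set D : Submodule ℝ E := ⨆ μ : ℝ, Module.End.eigenspace (T : E →ₗ[ℝ] E) μ with hD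
  have hdense : D.topologicalClosure = ⊤ :=
    Submodule.topologicalClosure_eq_top_iff.mpr
      (orthogonal_iSup_eigenspaces_eq_bot' T hTc hTsa)
  have hsub : ∀ y ∈ D, d * ‖y‖ ≤ ‖T y - lam • y‖ := by
    intro y hy
    rw [hD, Submodule.mem_iSup_iff_exists_finsupp] at hy
    obtain ⟨f, hfmem, hfsum⟩ := hy
    set s : Finset ℝ := f.support with hs
    have hy_eq : y = ∑ μ ∈ s, f μ := by rw [← hfsum]; rfl
    have hOF := hTsa.isSymmetric.orthogonalFamily_eigenspaces
    set l : ∀ μ : ℝ, Module.End.eigenspace (T : E →ₗ[ℝ] E) μ :=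
      fun μ => ⟨f μ, hfmem μ⟩ with hl
    have hnorm1 : ‖y‖ ^ 2 = ∑ μ ∈ s, ‖f μ‖ ^ 2 := by
      have := hOF.norm_sum l s
      simpa [hy_eq] using this
    have heig : ∀ μ : ℝ, T (f μ) = μ • f μ := by
      intro μ
      have := hfmem μ
      rw [Module.End.mem_eigenspace_iff] at this
      simpa using this
    have hTy : T y - lam • y = ∑ μ ∈ s, (μ - lam) • f μ := by
      rw [hy_eq, map_sum, Finset.smul_sum, ← Finset.sum_sub_distrib]
      refine Finset.sum_congr rfl fun μ _ => ?_
      rw [heig μ, sub_smul]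
    set l' : ∀ μ : ℝ, Module.End.eigenspace (T : E →ₗ[ℝ] E) μ :=
      fun μ => (μ - lam) • l μ with hl'
    have hnorm2 : ‖T y - lam • y‖ ^ 2 = ∑ μ ∈ s, ‖(μ - lam) • f μ‖ ^ 2 := by
      have := hOF.norm_sum l' s
      simpa [hTy, hl', hl] using this
    have hterm : ∀ μ ∈ s, d ^ 2 * ‖f μ‖ ^ 2 ≤ ‖(μ - lam) • f μ‖ ^ 2 := by
      intro μ _
      rcases eq_or_ne (f μ) 0 with h0 | h0
      · simp [h0]
      · have hdm : d ≤ |lam - μ| := hcl μ ⟨f μ, h0, heig μ⟩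
        have : d ^ 2 ≤ |lam - μ| ^ 2 := pow_le_pow_left₀ hd hdm 2
        rw [norm_smul, Real.norm_eq_abs, mul_pow, ← abs_neg, neg_sub]
        exact mul_le_mul_of_nonneg_right this (sq_nonneg _)
    have hsq : (d * ‖y‖) ^ 2 ≤ ‖T y - lam • y‖ ^ 2 := by
      rw [mul_pow, hnorm1, hnorm2, Finset.mul_sum]
      exact Finset.sum_le_sum hterm
    nlinarith [norm_nonneg (T y - lam • y), mul_nonneg hd (norm_nonneg y)]
  have hclosed : IsClosed {y : E | d * ‖y‖ ≤ ‖T y - lam • y‖} :=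
    isClosed_le (continuous_const.mul continuous_norm)
      ((T.continuous.sub (continuous_id.const_smul lam)).norm)
  have hx : x ∈ closure (D : Set E) := by
    have : (D.topologicalClosure : Set E) = closure (D : Set E) :=
      Submodule.topologicalClosure_coe D
    rw [← this, hdense]
    trivial
  exact hclosed.closure_subset_iff.mpr (fun y hy => hsub y hy) hx

end AuxEigen

/-- For a compact self-adjoint Koopman operator `A` on `L²_π(X)`,
any rank-`r` (Hilbert–Schmidt) estimator `G : H → H` and any eigenpair `(lam, ψ)` of `G`
with `lam ≠ 0` and `S ψ ≠ 0`, the distance of `lam` to the closest eigenvalue `μ` of `A`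
is bounded by the metric distortion `η(ψ) = ‖ψ‖/‖S ψ‖` times the operator norm error
`E(G) = ‖A ∘ S - S ∘ G‖`. -/
theorem eigenvalue_error_le_distortion_mul_opNormError
    {X : Type*} [MeasurableSpace X] (π : Measure X) [IsProbabilityMeasure π]
    {H : Type*} [NormedAddCommGroup H] [InnerProductSpace ℝ H] [CompleteSpace H]
    [TopologicalSpace.SeparableSpace H]
    -- the Koopman operator: compact and self-adjoint on L²_π(X)
    (A : Lp ℝ 2 π →L[ℝ] Lp ℝ 2 π)
    (hAc : IsCompactOperator (A : Lp ℝ 2 π → Lp ℝ 2 π)) (hAsa : IsSelfAdjoint A)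
    -- the injection S : H → L²_π(X)
    (S : H →L[ℝ] Lp ℝ 2 π) (hSinj : Function.Injective S)
    -- a rank ≤ r estimator
    (r : ℕ) (G : H →L[ℝ] H)
    (hrank : Module.rank ℝ (LinearMap.range (G : H →ₗ[ℝ] H)) ≤ (r : Cardinal))
    -- an eigenpair of G with nonzero eigenvalue and S ψ ≠ 0
    (lam : ℝ) (ψ : H) (heig : G ψ = lam • ψ) (hlam : lam ≠ 0) (hSψ : S ψ ≠ 0)
    -- μ is the eigenvalue of A closest to lam
    (μ : ℝ) (hμ : ∃ f : Lp ℝ 2 π, f ≠ 0 ∧ A f = μ • f)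
    (hclosest : ∀ μ' : ℝ, (∃ f : Lp ℝ 2 π, f ≠ 0 ∧ A f = μ' • f) → |lam - μ| ≤ |lam - μ'|) :
    |lam - μ| ≤ (‖ψ‖ / ‖S ψ‖) * ‖A ∘L S - S ∘L G‖ := by
  have hSψpos : (0:ℝ) < ‖S ψ‖ := norm_pos_iff.mpr hSψ
  have hkey : A (S ψ) - lam • S ψ = (A ∘L S - S ∘L G) ψ := by
    simp only [ContinuousLinearMap.sub_apply, ContinuousLinearMap.comp_apply, heig, S.map_smul]
  have h1 : |lam - μ| * ‖S ψ‖ ≤ ‖A (S ψ) - lam • S ψ‖ :=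
    lower_bound' A hAc hAsa lam (|lam - μ|) (abs_nonneg _)
      (fun μ' ⟨f, hf0, hf⟩ => hclosest μ' ⟨f, hf0, hf⟩) (S ψ)
  have h2 : ‖A (S ψ) - lam • S ψ‖ ≤ ‖A ∘L S - S ∘L G‖ * ‖ψ‖ := by
    rw [hkey]; exact (A ∘L S - S ∘L G).le_opNorm ψ
  rw [div_mul_eq_mul_div, le_div_iff₀ hSψpos]
  calc |lam - μ| * ‖S ψ‖ ≤ ‖A ∘L S - S ∘L G‖ * ‖ψ‖ := le_trans h1 h2
  _ = ‖ψ‖ * ‖A ∘L S - S ∘L G‖ := mul_comm _ _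
end
end

section
/- Let Ĝ : H → H be a Hilbert–Schmidt operator of rank at most r, let (λ̂_i, ψ̂_i) be an eigenpair of Ĝ with λ̂_i ≠ 0 and S ψ̂_i ≠ 0, and let ξ̂_i be a corresponding left eigenfunction (Ĝ* ξ̂_i = λ̂_i ξ̂_i) with ⟨ψ̂_i, ξ̂_i⟩ ≠ 0. Then the metric distortion of ψ̂_i is bounded as 1/√‖C‖ ≤ η(ψ̂_i) ≤ min(|λ̂_i| κ(λ̂_i), ‖Ĝ‖) / σ⁺_min(S Ĝ), where κ(λ̂_i) := ‖ξ̂_i‖ ‖ψ̂_i‖ / |⟨ψ̂_i, ξ̂_i⟩| is the condition number of the eigenvalue λ̂_i and σ⁺_min(S Ĝ) denotes the smallest nonzero singular value of S Ĝ. -/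
open MeasureTheory ContinuousLinearMap
open scoped RealInnerProductSpace ENNReal NNReal

noncomputable section
set_option synthInstance.maxHeartbeats 1000000
set_option maxHeartbeats 1000000

/-- Tight bounds on the metric distortion `η(ψ) = ‖ψ‖/‖S ψ‖` of an
eigenfunction `ψ` of a rank ≤ r estimator `G`:
`1/√‖C‖ ≤ η(ψ) ≤ min(|lam| κ(lam), ‖G‖) / σ⁺_min(S G)`, where `C = S*S`,
`κ(lam) = ‖ξ‖‖ψ‖/|⟪ψ, ξ⟫|` for a left eigenfunction `ξ`, and `σ⁺_min(S G)` is the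
smallest nonzero singular value of `S ∘ G`, i.e. the infimum of `‖(S ∘ G) g‖/‖g‖`
over nonzero `g` orthogonal to the kernel of `S ∘ G`. -/
theorem metric_distortion_bounds
    {X : Type*} [MeasurableSpace X] (π : Measure X) [IsProbabilityMeasure π]
    {H : Type*} [NormedAddCommGroup H] [InnerProductSpace ℝ H] [CompleteSpace H]
    [TopologicalSpace.SeparableSpace H]
    -- the injection S : H → L²_π(X)
    (S : H →L[ℝ] Lp ℝ 2 π) (hSinj : Function.Injective S)
    -- a rank ≤ r estimator
    (r : ℕ) (G : H →L[ℝ] H)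
    (hrank : Module.rank ℝ (LinearMap.range (G : H →ₗ[ℝ] H)) ≤ (r : Cardinal))
    -- an eigenpair of G with nonzero eigenvalue and S ψ ≠ 0
    (lam : ℝ) (ψ : H) (heig : G ψ = lam • ψ) (hlam : lam ≠ 0) (hSψ : S ψ ≠ 0)
    -- a corresponding left eigenfunction
    (ξ : H) (hleft : adjoint G ξ = lam • ξ) (hξψ : ⟪ψ, ξ⟫ ≠ 0) :
    1 / Real.sqrt ‖adjoint S ∘L S‖ ≤ ‖ψ‖ / ‖S ψ‖ ∧
    ‖ψ‖ / ‖S ψ‖ ≤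
      min (|lam| * (‖ξ‖ * ‖ψ‖ / |⟪ψ, ξ⟫|)) ‖G‖ /
        sInf {t : ℝ | ∃ g : H,
          g ∈ (LinearMap.ker ((S ∘L G : H →L[ℝ] Lp ℝ 2 π) : H →ₗ[ℝ] Lp ℝ 2 π))ᗮ ∧ g ≠ 0 ∧ t = ‖(S ∘L G) g‖ / ‖g‖} := by
  have hψ0 : ψ ≠ 0 := fun h => hSψ (by simp [h])
  have hψpos : 0 < ‖ψ‖ := norm_pos_iff.mpr hψ0
  have hSψpos : 0 < ‖S ψ‖ := norm_pos_iff.mpr hSψ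
  have hlampos : 0 < |lam| := abs_pos.mpr hlam
  have hippos : 0 < |⟪ψ, ξ⟫| := abs_pos.mpr hξψ
  constructor
  · -- lower bound
    rw [norm_adjoint_comp_self S, Real.sqrt_mul_self (norm_nonneg S)]
    have hSpos : 0 < ‖S‖ := by
      rcases (norm_nonneg S).lt_or_eq with h | h
      · exact h
      · exfalso; apply hSψ
        have : S = 0 := by rw [← norm_eq_zero, ← h]
        simp [this]
    have hle : ‖S ψ‖ ≤ ‖ψ‖ * ‖S‖ := by
      calc ‖S ψ‖ ≤ ‖S‖ * ‖ψ‖ := S.le_opNorm ψ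
        _ = ‖ψ‖ * ‖S‖ := mul_comm _ _
    rw [div_le_div_iff₀ hSpos hSψpos]
    linarith
  · -- upper bound
    set T : H →L[ℝ] Lp ℝ 2 π := S ∘L G with hT
    set K : Submodule ℝ H := LinearMap.ker (T : H →ₗ[ℝ] Lp ℝ 2 π) with hK
    haveI : CompleteSpace K := (ContinuousLinearMap.isClosed_ker T).completeSpace_coe
    have hmemK : ∀ x : H, x ∈ K ↔ G x = 0 := by
      intro x
      constructor
      · intro hx
        have : S (G x) = S 0 := by
          simpa [hK, hT, map_zero] using hx
        exact hSinj this
      · intro hx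
        simp [hK, LinearMap.mem_ker, hT, ContinuousLinearMap.comp_apply, hx]
    set ψ0 : H := (K.orthogonalProjection ψ : H) with hψ0def
    set w : H := ψ - ψ0 with hwdef
    have hw_mem : w ∈ Kᗮ := Submodule.sub_starProjection_mem_orthogonal (K := K) ψ
    have hGψ0 : G ψ0 = 0 := (hmemK ψ0).mp (Submodule.coe_mem _)
    have hGw : G w = lam • ψ := by
      rw [hwdef, map_sub, hGψ0, heig, sub_zero]
    have hTw : T w = lam • S ψ := by
      rw [hT]; simp only [ContinuousLinearMap.comp_apply, hGw, _root_.map_smul]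
    have hw0 : w ≠ 0 := by
      intro h
      rw [h, map_zero] at hTw
      exact hSψ (by
        rcases smul_eq_zero.mp hTw.symm with h' | h'
        · exact absurd h' hlam
        · exact h')
    have hwpos : 0 < ‖w‖ := norm_pos_iff.mpr hw0
    -- the infimum set
    set sigSet : Set ℝ := {t : ℝ | ∃ g : H, g ∈ Kᗮ ∧ g ≠ 0 ∧ t = ‖T g‖ / ‖g‖} with hsigSet
    have hmem : ‖T w‖ / ‖w‖ ∈ sigSet := ⟨w, hw_mem, hw0, rfl⟩
    have hbdd : BddBelow sigSet := by
      refine ⟨0, ?_⟩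
      rintro t ⟨g, -, -, rfl⟩
      positivity
    -- Kᗮ is finite dimensional
    haveI hfd : FiniteDimensional ℝ Kᗮ := by
      set f : Kᗮ →ₗ[ℝ] Lp ℝ 2 π := T.toLinearMap.domRestrict Kᗮ with hf
      have hfinj : Function.Injective f := by
        intro x y hxy
        have hmem' : (x - y : Kᗮ) = 0 := by
          have hTxy : T ((x : H) - y) = 0 := by
            have h1 : T ((x : H) - y) = f x - f y := by
              simp [hf, LinearMap.domRestrict_apply, map_sub]
            rw [h1, hxy, sub_self]
          have hker : ((x : H) - y) ∈ K := LinearMap.mem_ker.mpr hTxy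
          have horth : ((x : H) - y) ∈ Kᗮ := sub_mem x.2 y.2
          have := (Submodule.orthogonal_disjoint K).le_bot ⟨hker, horth⟩
          ext
          simpa using this
        exact sub_eq_zero.mp hmem'
      haveI hGfd : FiniteDimensional ℝ (LinearMap.range (G : H →ₗ[ℝ] H)) :=
        Module.rank_lt_aleph0_iff.mp (lt_of_le_of_lt hrank (Cardinal.nat_lt_aleph0 r))
      have hrangeT : LinearMap.range T.toLinearMap =
          Submodule.map S.toLinearMap (LinearMap.range G.toLinearMap) := by
        rw [← LinearMap.range_comp]
        rfl
      haveI hGfd' : FiniteDimensional ℝ (LinearMap.range G.toLinearMap) := hGfd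
      haveI hTfd : FiniteDimensional ℝ (LinearMap.range T.toLinearMap) := by
        rw [hrangeT]
        exact Module.Finite.map _ _
      have h2 : LinearMap.range f ≤ LinearMap.range T.toLinearMap := by
        rintro y ⟨x, rfl⟩
        exact ⟨x, rfl⟩
      haveI : FiniteDimensional ℝ (LinearMap.range f) := Submodule.finiteDimensional_of_le h2
      exact (LinearEquiv.ofInjective f hfinj).symm.finiteDimensional
    -- σ > 0
    have hσpos : 0 < sInf sigSet := by
      set f : Kᗮ →ₗ[ℝ] Lp ℝ 2 π := T.toLinearMap.domRestrict Kᗮ with hf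
      have hfker : LinearMap.ker f = ⊥ := by
        rw [LinearMap.ker_eq_bot']
        intro x hx
        have hker : (x : H) ∈ K := LinearMap.mem_ker.mpr
          (by simpa [hf, LinearMap.domRestrict_apply] using hx)
        have := (Submodule.orthogonal_disjoint K).le_bot ⟨hker, x.2⟩
        ext
        simpa using this
      obtain ⟨c, hc, hanti⟩ := f.exists_antilipschitzWith hfker
      have hle : ∀ t ∈ sigSet, (c : ℝ)⁻¹ ≤ t := by
        rintro t ⟨g, hg, hg0, rfl⟩
        have hgpos : 0 < ‖g‖ := norm_pos_iff.mpr hg0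
        have : ‖g‖ ≤ c * ‖T g‖ := by
          have := hanti.le_mul_dist ⟨g, hg⟩ 0
          simpa [hf, dist_eq_norm, LinearMap.domRestrict_apply] using this
        have hcpos : (0 : ℝ) < (c : ℝ) := by exact_mod_cast hc
        rw [le_div_iff₀ hgpos, inv_mul_le_iff₀ hcpos]
        exact this
      have hcinv : (0 : ℝ) < (c : ℝ)⁻¹ := by positivity
      exact lt_of_lt_of_le hcinv (le_csInf ⟨_, hmem⟩ hle)
    set σ : ℝ := sInf sigSet with hσ
    have hσle : σ ≤ ‖T w‖ / ‖w‖ := csInf_le hbdd hmem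
    have hTwnorm : ‖T w‖ = |lam| * ‖S ψ‖ := by
      rw [hTw, norm_smul, Real.norm_eq_abs]
    have hkey : σ * ‖w‖ ≤ |lam| * ‖S ψ‖ := by
      rw [← hTwnorm]
      calc σ * ‖w‖ ≤ (‖T w‖ / ‖w‖) * ‖w‖ := by
            exact mul_le_mul_of_nonneg_right hσle (norm_nonneg w)
        _ = ‖T w‖ := div_mul_cancel₀ _ (ne_of_gt hwpos)
    have hGbound : |lam| * ‖ψ‖ ≤ ‖G‖ * ‖w‖ := by
      calc |lam| * ‖ψ‖ = ‖lam • ψ‖ := by rw [norm_smul, Real.norm_eq_abs]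
        _ = ‖G w‖ := by rw [hGw]
        _ ≤ ‖G‖ * ‖w‖ := G.le_opNorm w
    have hinnerw : ⟪ψ, ξ⟫ = ⟪w, ξ⟫ := by
      have h0 : ⟪ψ0, ξ⟫ = 0 := by
        have : lam * ⟪ψ0, ξ⟫ = 0 := by
          calc lam * ⟪ψ0, ξ⟫ = ⟪ψ0, lam • ξ⟫ := by
                rw [real_inner_smul_right]
            _ = ⟪ψ0, adjoint G ξ⟫ := by rw [hleft]
            _ = ⟪G ψ0, ξ⟫ := ContinuousLinearMap.adjoint_inner_right G ψ0 ξ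
            _ = 0 := by rw [hGψ0, inner_zero_left]
        rcases mul_eq_zero.mp this with h | h
        · exact absurd h hlam
        · exact h
      calc ⟪ψ, ξ⟫ = ⟪w + ψ0, ξ⟫ := by rw [hwdef]; congr 1; abel
        _ = ⟪w, ξ⟫ + ⟪ψ0, ξ⟫ := inner_add_left _ _ _
        _ = ⟪w, ξ⟫ := by rw [h0, add_zero]
    have hinner : |⟪ψ, ξ⟫| ≤ ‖w‖ * ‖ξ‖ := by
      rw [hinnerw]
      exact abs_real_inner_le_norm w ξ
    rw [div_le_div_iff₀ hSψpos hσpos]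
    rw [min_mul_of_nonneg _ _ (le_of_lt hSψpos), le_min_iff]
    constructor
    · have key : ‖ψ‖ * σ * |⟪ψ, ξ⟫| ≤ |lam| * (‖ξ‖ * ‖ψ‖) * ‖S ψ‖ := by
        have h1 : σ * ‖w‖ ≤ |lam| * ‖S ψ‖ := hkey
        have hσnn : 0 ≤ σ := le_of_lt hσpos
        nlinarith [norm_nonneg ξ, norm_nonneg w, norm_nonneg ψ, abs_nonneg ⟪ψ, ξ⟫,
          mul_le_mul_of_nonneg_left hinner (mul_nonneg hψpos.le hσnn),
          mul_le_mul_of_nonneg_left h1 (mul_nonneg (norm_nonneg ψ) (norm_nonneg ξ))]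
      have : |lam| * (‖ξ‖ * ‖ψ‖ / |⟪ψ, ξ⟫|) * ‖S ψ‖
          = |lam| * (‖ξ‖ * ‖ψ‖) * ‖S ψ‖ / |⟪ψ, ξ⟫| := by ring
      rw [this, le_div_iff₀ hippos]
      exact key
    · have hσnn : 0 ≤ σ := le_of_lt hσpos
      nlinarith [mul_le_mul_of_nonneg_left hkey (norm_nonneg G),
        mul_le_mul_of_nonneg_left hGbound hσnn, norm_nonneg G, norm_nonneg w]
end
end

section
/- Let Ĝ : H → H be a Hilbert–Schmidt operator of rank at most r and (λ̂_i, ψ̂_i) an eigenpair of Ĝ with λ̂_i ≠ 0, S ψ̂_i ≠ 0 and ⟨Ĉ ψ̂_i, ψ̂_i⟩ > 0. Then the empirical metric distortion η̂_i := ‖ψ̂_i‖ / √⟨Ĉ ψ̂_i, ψ̂_i⟩ satisfies |η̂_i − η(ψ̂_i)| ≤ min(η(ψ̂_i), η̂_i) · η(ψ̂_i) · η̂_i · ‖Ĉ − C‖. -/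
open MeasureTheory ContinuousLinearMap
open scoped RealInnerProductSpace ENNReal NNReal

noncomputable section

/-- Concentration of the empirical metric distortion
`η̂ = ‖ψ‖/√⟪Ĉ ψ, ψ⟫` around the true metric distortion `η(ψ) = ‖ψ‖/‖S ψ‖`:
`|η̂ - η(ψ)| ≤ min(η(ψ), η̂) · η(ψ) · η̂ · ‖Ĉ - C‖`, where `C = S*S` and `Ĉ` is any
positive self-adjoint operator (e.g. the empirical covariance). -/
theorem empirical_metric_distortion_concentration
    {X : Type*} [MeasurableSpace X] (π : Measure X) [IsProbabilityMeasure π]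
    {H : Type*} [NormedAddCommGroup H] [InnerProductSpace ℝ H] [CompleteSpace H]
    [TopologicalSpace.SeparableSpace H]
    -- the injection S : H → L²_π(X)
    (S : H →L[ℝ] Lp ℝ 2 π) (hSinj : Function.Injective S)
    -- a rank ≤ r estimator
    (r : ℕ) (G : H →L[ℝ] H)
    (hrank : Module.rank ℝ (LinearMap.range (G : H →ₗ[ℝ] H)) ≤ (r : Cardinal))
    -- an eigenpair of G with nonzero eigenvalue and S ψ ≠ 0
    (lam : ℝ) (ψ : H) (heig : G ψ = lam • ψ) (hlam : lam ≠ 0) (hSψ : S ψ ≠ 0)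
    -- a positive self-adjoint operator (the empirical covariance)
    (Chat : H →L[ℝ] H) (hChat : Chat.IsPositive)
    (hpos : 0 < ⟪Chat ψ, ψ⟫) :
    |‖ψ‖ / Real.sqrt ⟪Chat ψ, ψ⟫ - ‖ψ‖ / ‖S ψ‖| ≤
      min (‖ψ‖ / ‖S ψ‖) (‖ψ‖ / Real.sqrt ⟪Chat ψ, ψ⟫) * (‖ψ‖ / ‖S ψ‖) *
        (‖ψ‖ / Real.sqrt ⟪Chat ψ, ψ⟫) * ‖Chat - adjoint S ∘L S‖ := by
  set a := ‖S ψ‖ with ha_def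
  set b := Real.sqrt ⟪Chat ψ, ψ⟫ with hb_def
  set n := ‖ψ‖ with hn_def
  set D := Chat - adjoint S ∘L S with hD_def
  have ha : 0 < a := norm_pos_iff.mpr hSψ
  have hb : 0 < b := Real.sqrt_pos.mpr hpos
  have hψ : ψ ≠ 0 := fun h => hSψ (by simp [h])
  have hn : 0 < n := norm_pos_iff.mpr hψ
  have hε : 0 ≤ ‖D‖ := norm_nonneg _
  have hb2 : b ^ 2 = ⟪Chat ψ, ψ⟫ := Real.sq_sqrt hpos.le
  have ha2 : a ^ 2 = ⟪(adjoint S ∘L S) ψ, ψ⟫ := by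
    rw [ContinuousLinearMap.comp_apply, ContinuousLinearMap.adjoint_inner_left,
      real_inner_self_eq_norm_sq]
  have key : |b ^ 2 - a ^ 2| ≤ ‖D‖ * n ^ 2 := by
    rw [hb2, ha2]
    have h1 : ⟪Chat ψ, ψ⟫ - ⟪(adjoint S ∘L S) ψ, ψ⟫ = ⟪D ψ, ψ⟫ := by
      rw [hD_def]; simp [inner_sub_left]
    rw [h1]
    calc |⟪D ψ, ψ⟫| ≤ ‖D ψ‖ * ‖ψ‖ := abs_real_inner_le_norm _ _
      _ ≤ (‖D‖ * ‖ψ‖) * ‖ψ‖ := by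
          exact mul_le_mul_of_nonneg_right (D.le_opNorm ψ) (norm_nonneg ψ)
      _ = ‖D‖ * n ^ 2 := by ring
  rcases le_total a b with hab | hab
  · have hmin : min (n / a) (n / b) = n / b :=
      min_eq_right (div_le_div_of_nonneg_left hn.le ha hab)
    have hle : n / b ≤ n / a := div_le_div_of_nonneg_left hn.le ha hab
    rw [hmin, abs_of_nonpos (by linarith), neg_sub]
    have hba : b ^ 2 - a ^ 2 ≤ ‖D‖ * n ^ 2 := (abs_le.mp key).2
    rw [div_sub_div _ _ ha.ne' hb.ne', div_le_iff₀ (by positivity)]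
    have hRHS : n / b * (n / a) * (n / b) * ‖D‖ * (a * b) = n ^ 3 * ‖D‖ / b := by
      field_simp
    rw [hRHS, le_div_iff₀ hb]
    nlinarith [mul_le_mul_of_nonneg_left hba hn.le,
      mul_nonneg (mul_nonneg hn.le ha.le) (sub_nonneg.mpr hab)]
  · have hmin : min (n / a) (n / b) = n / a :=
      min_eq_left (div_le_div_of_nonneg_left hn.le hb hab)
    have hle : n / a ≤ n / b := div_le_div_of_nonneg_left hn.le hb hab
    rw [hmin, abs_of_nonneg (by linarith)]
    have hba : a ^ 2 - b ^ 2 ≤ ‖D‖ * n ^ 2 := by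
      have := (abs_le.mp key).1; linarith
    rw [div_sub_div _ _ hb.ne' ha.ne', div_le_iff₀ (by positivity)]
    have hRHS : n / a * (n / a) * (n / b) * ‖D‖ * (b * a) = n ^ 3 * ‖D‖ / a := by
      field_simp
    rw [hRHS, le_div_iff₀ ha]
    nlinarith [mul_le_mul_of_nonneg_left hba hn.le,
      mul_nonneg (mul_nonneg hn.le hb.le) (sub_nonneg.mpr hab)]
end
end

section
/- Let W_γ := C_γ^{-1} T for γ > 0 and let P_H : L²_π(X) → L²_π(X) be the orthogonal projection onto the closure of range(S). If assumptions (BK), (SD) with β ∈ (0,1] and (RC) with parameter α hold, then: ‖W_γ‖ ≤ a c_H^{(α−1)/2} when α ∈ [1,2]; ‖W_γ‖ ≤ a γ^{(α−1)/2} when α ∈ (0,1]; and ‖A S − S W_γ‖ ≤ a γ^{α/2} + ‖(I − P_H) A S‖. -/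
open MeasureTheory ContinuousLinearMap
open scoped RealInnerProductSpace ENNReal NNReal

noncomputable section

/-! ### Auxiliary lemmas -/

private lemma my_ortho_sq_norm {E : Type*} [NormedAddCommGroup E] [InnerProductSpace ℝ E]
    {v : ℕ → E} (hv : Orthonormal ℝ v) (c : ℕ → ℝ) (F : Finset ℕ) :
    ‖∑ j ∈ F, c j • v j‖ ^ 2 = ∑ j ∈ F, c j ^ 2 := by
  rw [← real_inner_self_eq_norm_sq, hv.inner_sum]
  simp [sq]

private lemma my_ortho_summable {E : Type*} [NormedAddCommGroup E] [InnerProductSpace ℝ E]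
    [CompleteSpace E] {v : ℕ → E} (hv : Orthonormal ℝ v) {c : ℕ → ℝ}
    (hc : Summable fun j => c j ^ 2) : Summable fun j => c j • v j := by
  rw [summable_iff_vanishing_norm]
  intro ε hε
  obtain ⟨s, hs⟩ := summable_iff_vanishing_norm.1 hc (ε ^ 2) (by positivity)
  refine ⟨s, fun t ht => ?_⟩
  have h1 : ‖∑ j ∈ t, c j • v j‖ ^ 2 = ∑ j ∈ t, c j ^ 2 := my_ortho_sq_norm hv c t
  have h2 : ∑ j ∈ t, c j ^ 2 < ε ^ 2 := by
    have := hs t ht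
    calc ∑ j ∈ t, c j ^ 2 ≤ |∑ j ∈ t, c j ^ 2| := le_abs_self _
    _ < ε ^ 2 := by rwa [← Real.norm_eq_abs]
  exact lt_of_pow_lt_pow_left₀ 2 hε.le (by rw [h1]; exact h2)

private lemma my_hasSum_inner {E : Type*} [NormedAddCommGroup E] [InnerProductSpace ℝ E]
    [CompleteSpace E] {v : ℕ → E} (hv : Orthonormal ℝ v)
    (hcomplete : ∀ h : E, h = ∑' j, ⟪v j, h⟫ • v j) (x z : E) :
    HasSum (fun j => ⟪v j, x⟫ * ⟪v j, z⟫) ⟪x, z⟫ := by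
  have hsummable : Summable fun j => ⟪v j, x⟫ • v j := by
    apply my_ortho_summable hv
    have := hv.inner_products_summable x
    simpa [Real.norm_eq_abs, sq_abs] using this
  have hx : HasSum (fun j => ⟪v j, x⟫ • v j) x := by
    have := hsummable.hasSum
    rwa [← hcomplete x] at this
  have := hx.mapL (innerSL ℝ z)
  simpa [real_inner_smul_right, real_inner_comm] using this

private lemma my_key_sum_bound {H : Type*} [NormedAddCommGroup H] [InnerProductSpace ℝ H]
    [CompleteSpace H] (T : H →L[ℝ] H) {hv : ℕ → H} (hONh : Orthonormal ℝ hv)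
    (sigs : ℕ → ℝ) (α a : ℝ)
    (hRC : ∀ h : H, ‖adjoint T h‖ ^ 2 ≤ a ^ 2 * ∑' j, (sigs j ^ 2) ^ (1 + α) * ⟪hv j, h⟫ ^ 2)
    (w : ℕ → ℝ) (hw : ∀ j, 0 ≤ w j) (M : ℝ) (hM0 : 0 ≤ M)
    (hM : ∀ j, (sigs j ^ 2) ^ (1 + α) * w j ≤ M)
    (h : H) (F : Finset ℕ) :
    ∑ j ∈ F, w j * ⟪adjoint T (hv j), h⟫ ^ 2 ≤ a ^ 2 * M * ‖h‖ ^ 2 := by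
  classical
  set c : ℕ → ℝ := fun j => ⟪adjoint T (hv j), h⟫ with hc
  set v : H := ∑ j ∈ F, (w j * c j) • hv j with hvdef
  set Sq : ℝ := ∑ j ∈ F, w j * c j ^ 2 with hSq
  have hSqnn : 0 ≤ Sq := Finset.sum_nonneg fun j _ => mul_nonneg (hw j) (sq_nonneg _)
  have step1 : ⟪adjoint T v, h⟫ = Sq := by
    rw [ContinuousLinearMap.adjoint_inner_left, hvdef, sum_inner]
    refine Finset.sum_congr rfl fun j _ => ?_
    rw [real_inner_smul_left, ← ContinuousLinearMap.adjoint_inner_left]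
    ring
  have hcoeff : ∀ k, ⟪hv k, v⟫ = if k ∈ F then w k * c k else 0 := by
    intro k
    by_cases hk : k ∈ F
    · rw [hvdef, hONh.inner_right_sum _ hk, if_pos hk]
    · rw [if_neg hk, hvdef, inner_sum]
      refine Finset.sum_eq_zero fun j hj => ?_
      rw [real_inner_smul_right, orthonormal_iff_ite.mp hONh]
      have : k ≠ j := fun h' => hk (h' ▸ hj)
      simp [this]
  have step3 : ‖adjoint T v‖ ^ 2 ≤ a ^ 2 * (M * Sq) := by
    refine (hRC v).trans ?_
    have htsum : ∑' j, (sigs j ^ 2) ^ (1 + α) * ⟪hv j, v⟫ ^ 2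
        = ∑ j ∈ F, (sigs j ^ 2) ^ (1 + α) * (w j * c j) ^ 2 := by
      rw [tsum_eq_sum (s := F) (f := fun j => (sigs j ^ 2) ^ (1 + α) * ⟪hv j, v⟫ ^ 2)
        (fun j hj => by beta_reduce; rw [hcoeff j, if_neg hj]; ring)]
      exact Finset.sum_congr rfl fun j hj => by rw [hcoeff j, if_pos hj]
    rw [htsum]
    have hle : ∑ j ∈ F, (sigs j ^ 2) ^ (1 + α) * (w j * c j) ^ 2 ≤ M * Sq := by
      rw [hSq, Finset.mul_sum]
      refine Finset.sum_le_sum fun j _ => ?_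
      have h1 : (sigs j ^ 2) ^ (1 + α) * (w j * c j) ^ 2
          = ((sigs j ^ 2) ^ (1 + α) * w j) * (w j * c j ^ 2) := by ring
      rw [h1]
      exact mul_le_mul_of_nonneg_right (hM j) (mul_nonneg (hw j) (sq_nonneg _))
    exact mul_le_mul_of_nonneg_left hle (sq_nonneg a)
  have step2 : Sq ≤ ‖adjoint T v‖ * ‖h‖ := step1 ▸ real_inner_le_norm _ _
  nlinarith [norm_nonneg (adjoint T v), norm_nonneg h, sq_nonneg (a * ‖h‖),
    mul_nonneg (mul_nonneg (sq_nonneg a) hM0) (sq_nonneg ‖h‖)]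

private lemma my_M1 {s cH γ α : ℝ} (hs : 0 ≤ s) (hsc : s ≤ cH) (hγ : 0 < γ) (h1 : 1 ≤ α) :
    s ^ (1 + α) * ((s + γ) ^ 2)⁻¹ ≤ cH ^ (α - 1) := by
  rcases eq_or_lt_of_le hs with h0 | h0
  · rw [← h0, Real.zero_rpow (by positivity), zero_mul]
    exact Real.rpow_nonneg (hs.trans hsc) _
  · have hsγ : (0:ℝ) < s + γ := by linarith
    have key : s ^ (1 + α) = s ^ (α - 1) * s ^ 2 := by
      rw [← Real.rpow_natCast s 2, ← Real.rpow_add h0]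
      congr 1
      push_cast; ring
    rw [key, mul_assoc]
    have h2 : s ^ 2 * ((s + γ) ^ 2)⁻¹ ≤ 1 := by
      rw [mul_inv_le_iff₀ (by positivity), one_mul]
      exact pow_le_pow_left₀ hs (by linarith) 2
    calc s ^ (α - 1) * (s ^ 2 * ((s + γ) ^ 2)⁻¹)
        ≤ s ^ (α - 1) * 1 := mul_le_mul_of_nonneg_left h2 (Real.rpow_nonneg hs _)
      _ = s ^ (α - 1) := mul_one _
      _ ≤ cH ^ (α - 1) := Real.rpow_le_rpow hs hsc (by linarith)

private lemma my_M2 {s γ α : ℝ} (hs : 0 ≤ s) (hγ : 0 < γ) (hα0 : 0 < α) (h1 : α ≤ 1) :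
    s ^ (1 + α) * ((s + γ) ^ 2)⁻¹ ≤ γ ^ (α - 1) := by
  have hsγ : (0:ℝ) < s + γ := by linarith
  rw [mul_inv_le_iff₀ (by positivity)]
  have key : ((s + γ) ^ 2 : ℝ) = (s + γ) ^ (1 + α) * (s + γ) ^ (1 - α) := by
    rw [← Real.rpow_add hsγ, ← Real.rpow_natCast (s + γ) 2]
    norm_num
  have h2 : s ^ (1 + α) * γ ^ (1 - α) ≤ (s + γ) ^ (1 + α) * (s + γ) ^ (1 - α) :=
    mul_le_mul (Real.rpow_le_rpow hs (by linarith) (by linarith))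
      (Real.rpow_le_rpow hγ.le (by linarith) (by linarith))
      (Real.rpow_nonneg hγ.le _) (Real.rpow_nonneg (by linarith) _)
  have h3 : γ ^ (α - 1) * (s ^ (1 + α) * γ ^ (1 - α)) = s ^ (1 + α) := by
    rw [show γ ^ (α-1) * (s ^ (1+α) * γ ^ (1-α)) = s ^ (1+α) * (γ ^ (α-1) * γ ^ (1-α)) by ring,
      ← Real.rpow_add hγ]
    norm_num
  calc s ^ (1 + α) = γ ^ (α - 1) * (s ^ (1 + α) * γ ^ (1 - α)) := h3.symm
    _ ≤ γ ^ (α - 1) * ((s + γ) ^ (1 + α) * (s + γ) ^ (1 - α)) :=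
        mul_le_mul_of_nonneg_left h2 (Real.rpow_nonneg hγ.le _)
    _ = γ ^ (α - 1) * (s + γ) ^ 2 := by rw [key]

private lemma my_M3 {s γ α : ℝ} (hs : 0 < s) (hγ : 0 < γ) (hα0 : 0 < α) (h2 : α ≤ 2) :
    s ^ (1 + α) * (γ ^ 2 * (s * (s + γ) ^ 2)⁻¹) ≤ γ ^ α := by
  have hsγ : (0:ℝ) < s + γ := by linarith
  have key : s ^ (1 + α) = s * s ^ α := by
    rw [Real.rpow_add hs, Real.rpow_one]
  have hmain : s ^ α * γ ^ 2 ≤ γ ^ α * (s + γ) ^ 2 := by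
    have k1 : ((s + γ) ^ 2 : ℝ) = (s + γ) ^ α * (s + γ) ^ (2 - α) := by
      rw [← Real.rpow_add hsγ, ← Real.rpow_natCast (s + γ) 2]; norm_num
    have k2 : s ^ α * γ ^ (2 - α) ≤ (s + γ) ^ α * (s + γ) ^ (2 - α) :=
      mul_le_mul (Real.rpow_le_rpow hs.le (by linarith) hα0.le)
        (Real.rpow_le_rpow hγ.le (by linarith) (by linarith))
        (Real.rpow_nonneg hγ.le _) (Real.rpow_nonneg hsγ.le _)
    have k3 : γ ^ α * (s ^ α * γ ^ (2 - α)) = s ^ α * γ ^ 2 := by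
      rw [show γ ^ α * (s ^ α * γ ^ (2-α)) = s ^ α * (γ ^ α * γ ^ (2-α)) by ring,
        ← Real.rpow_add hγ, ← Real.rpow_natCast γ 2]
      norm_num
    calc s ^ α * γ ^ 2 = γ ^ α * (s ^ α * γ ^ (2 - α)) := k3.symm
      _ ≤ γ ^ α * ((s + γ) ^ α * (s + γ) ^ (2 - α)) :=
          mul_le_mul_of_nonneg_left k2 (Real.rpow_nonneg hγ.le _)
      _ = γ ^ α * (s + γ) ^ 2 := by rw [k1]
  have lhs_eq : s ^ (1 + α) * (γ ^ 2 * (s * (s + γ) ^ 2)⁻¹)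
      = s ^ α * γ ^ 2 * ((s + γ) ^ 2)⁻¹ := by
    rw [key]; field_simp
  rw [lhs_eq, mul_inv_le_iff₀ (by positivity)]
  exact hmain

private lemma my_sqrt_bound {x a m n : ℝ} (ha : 0 ≤ a) (hm : 0 ≤ m) (hn : 0 ≤ n)
    (h : x ^ 2 ≤ a ^ 2 * m * n ^ 2) : x ≤ a * Real.sqrt m * n := by
  have hrhs : 0 ≤ a * Real.sqrt m * n := by positivity
  refine le_of_pow_le_pow_left₀ two_ne_zero hrhs ?_
  calc x ^ 2 ≤ a ^ 2 * m * n ^ 2 := h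
    _ = (a * Real.sqrt m * n) ^ 2 := by rw [mul_pow, mul_pow, Real.sq_sqrt hm]

set_option maxHeartbeats 2000000 in
/-- Regularization bias of the Tikhonov-regularized population
estimator `W_γ = C_γ^{-1} T`: under (BK), (SD) and (RC) with parameter `α`,
`‖W_γ‖ ≤ a c_H^{(α-1)/2}` when `α ∈ [1,2]`, `‖W_γ‖ ≤ a γ^{(α-1)/2}` when `α ∈ (0,1]`,
and `‖A S - S W_γ‖ ≤ a γ^{α/2} + ‖(I - P_H) A S‖`, where `P_H` is the orthogonal
projection of `L²_π(X)` onto the closure of `range S`. -/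
theorem regularization_bias_bound
    {X : Type*} [MeasurableSpace X] (π : Measure X) [IsProbabilityMeasure π]
    {H : Type*} [NormedAddCommGroup H] [InnerProductSpace ℝ H] [CompleteSpace H]
    [TopologicalSpace.SeparableSpace H]
    -- the Koopman operator: compact and self-adjoint on L²_π(X)
    (A : Lp ℝ 2 π →L[ℝ] Lp ℝ 2 π)
    (hAc : IsCompactOperator (A : Lp ℝ 2 π → Lp ℝ 2 π)) (hAsa : IsSelfAdjoint A)
    -- the injection S : H → L²_π(X)
    (S : H →L[ℝ] Lp ℝ 2 π) (hSinj : Function.Injective S)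
    -- covariance and cross-covariance operators
    (C T : H →L[ℝ] H) (hCdef : C = adjoint S ∘L S) (hTdef : T = adjoint S ∘L (A ∘L S))
    -- the feature map, with C = ∫ φ(x) ⊗ φ(x) dπ(x)
    (φ : X → H) (hCint : C = ∫ x, rankOne (φ x) (φ x) ∂π)
    -- (BK) boundedness
    (cH : ℝ) (hBK : ∀ᵐ x ∂π, ‖φ x‖ ^ 2 ≤ cH)
    -- a singular value decomposition (sigs j, ℓv j, hv j) of S
    (sigs : ℕ → ℝ) (ℓv : ℕ → Lp ℝ 2 π) (hv : ℕ → H)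
    (hONl : Orthonormal ℝ ℓv) (hONh : Orthonormal ℝ hv)
    (hsvd : ∀ j, S (hv j) = sigs j • ℓv j)
    (hsvd' : ∀ j, adjoint S (ℓv j) = sigs j • hv j)
    (hsig0 : ∀ j, 0 ≤ sigs j) (hanti : Antitone sigs)
    (hcomplete : ∀ h : H, h = ∑' j, ⟪hv j, h⟫ • hv j)
    -- regularity parameters
    (α β : ℝ) (hα : α ∈ Set.Ioc (0 : ℝ) 2) (hβ : β ∈ Set.Ioc (0 : ℝ) 1)
    -- (SD) spectral decay
    (b : ℝ) (hb : 0 < b) (hSD : ∀ j : ℕ, sigs j ^ 2 ≤ b * ((j : ℝ) + 1) ^ (-(1 / β)))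
    -- (RC) regularity: T T* ⪯ a² C^{1+α}
    (a : ℝ) (ha : 0 < a)
    (hRC : ∀ h : H, ‖adjoint T h‖ ^ 2 ≤ a ^ 2 * ∑' j, (sigs j ^ 2) ^ (1 + α) * ⟪hv j, h⟫ ^ 2)
    -- the regularized population estimator W_γ = C_γ^{-1} T
    (γ : ℝ) (hγ : 0 < γ) (W : H →L[ℝ] H) (hW : (C + γ • 1) ∘L W = T)
    -- P is the orthogonal projection onto the closure of range S
    (P : Lp ℝ 2 π →L[ℝ] Lp ℝ 2 π) (hPsa : IsSelfAdjoint P) (hPidem : P ∘L P = P)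
    (hPrange : LinearMap.range (P : Lp ℝ 2 π →ₗ[ℝ] Lp ℝ 2 π) =
      (LinearMap.range (S : H →ₗ[ℝ] Lp ℝ 2 π)).topologicalClosure) :
    (1 ≤ α → ‖W‖ ≤ a * cH ^ ((α - 1) / 2)) ∧
    (α ≤ 1 → ‖W‖ ≤ a * γ ^ ((α - 1) / 2)) ∧
    ‖A ∘L S - S ∘L W‖ ≤ a * γ ^ (α / 2) + ‖A ∘L S - P ∘L (A ∘L S)‖ := by
  classical
  obtain ⟨hα0, hα2⟩ := hα
  have hγ2 : ∀ j, (0:ℝ) < sigs j ^ 2 + γ := fun j => by positivity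
  -- c_H is nonnegative
  have hcH0 : 0 ≤ cH := by
    obtain ⟨x, hx⟩ := hBK.exists
    exact le_trans (sq_nonneg _) hx
  -- C acts diagonally on the (hv j)
  have hCapp : ∀ j, C (hv j) = (sigs j ^ 2) • hv j := by
    intro j
    rw [hCdef]
    show adjoint S (S (hv j)) = _
    rw [hsvd j, _root_.map_smul, hsvd' j, smul_smul, sq]
  -- eigenvalues of C are bounded by c_H
  have hsig_le : ∀ j, sigs j ^ 2 ≤ cH := by
    intro j
    have hinner : ⟪hv j, C (hv j)⟫ = sigs j ^ 2 := by
      rw [hCapp j, real_inner_smul_right, real_inner_self_eq_norm_sq, hONh.1 j]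
      norm_num
    by_cases hfi : Integrable (fun x => rankOne (φ x) (φ x)) π
    · have happ : C (hv j) = ∫ x, (rankOne (φ x) (φ x)) (hv j) ∂π := by
        rw [hCint]; exact ContinuousLinearMap.integral_apply hfi (hv j)
      have hint : Integrable (fun x => (rankOne (φ x) (φ x)) (hv j)) π :=
        hfi.apply_continuousLinearMap _
      have h3 : ∀ x, ⟪hv j, (rankOne (φ x) (φ x)) (hv j)⟫ = ⟪φ x, hv j⟫ ^ 2 := by
        intro x
        simp only [rankOne, ContinuousLinearMap.smulRight_apply, innerSL_apply_apply,
          real_inner_smul_right]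
        rw [real_inner_comm]; ring
      have h2 : sigs j ^ 2 = ∫ x, ⟪φ x, hv j⟫ ^ 2 ∂π := by
        rw [← hinner, happ, ← integral_inner hint]
        exact integral_congr_ae (Filter.Eventually.of_forall h3)
      have hint2 : Integrable (fun x => ⟪φ x, hv j⟫ ^ 2) π := by
        have h4 := (innerSL ℝ (hv j)).integrable_comp hint
        refine h4.congr (Filter.Eventually.of_forall fun x => ?_)
        simpa using (h3 x)
      have h5 : ∫ x, ⟪φ x, hv j⟫ ^ 2 ∂π ≤ ∫ _x, cH ∂π := by
        refine integral_mono_ae hint2 (integrable_const cH) ?_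
        filter_upwards [hBK] with x hx
        have habs := abs_real_inner_le_norm (φ x) (hv j)
        have hn1 : ‖hv j‖ = 1 := hONh.1 j
        rw [hn1, mul_one] at habs
        nlinarith [sq_abs ⟪φ x, hv j⟫, abs_nonneg ⟪φ x, hv j⟫, norm_nonneg (φ x)]
      rw [h2]
      calc ∫ x, ⟪φ x, hv j⟫ ^ 2 ∂π ≤ ∫ _x, cH ∂π := h5
        _ = cH := by simp [measure_univ]
    · have hC0 : C = 0 := by rw [hCint]; exact integral_undef hfi
      rw [← hinner, hC0]
      simpa using hcH0
  -- vanishing of T* on the kernel directions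
  have hd0 : ∀ j, sigs j = 0 → adjoint T (hv j) = 0 := by
    intro j hj
    have h1 := hRC (hv j)
    have h2 : (fun k => (sigs k ^ 2) ^ (1 + α) * ⟪hv k, hv j⟫ ^ 2) = fun _ => (0:ℝ) := by
      funext k
      rcases eq_or_ne k j with rfl | hkj
      · rw [hj]
        norm_num
        exact Or.inl (Real.zero_rpow (by positivity))
      · rw [orthonormal_iff_ite.mp hONh]
        simp [hkj]
    rw [h2] at h1
    simp only [tsum_zero, mul_zero] at h1
    have hnz : ‖adjoint T (hv j)‖ = 0 := by
      nlinarith [norm_nonneg (adjoint T (hv j))]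
    exact norm_eq_zero.mp hnz
  -- the defining equation for W, applied
  have hWapp : ∀ x : H, C (W x) + γ • W x = T x := by
    intro x
    have h1 := ContinuousLinearMap.ext_iff.mp hW x
    simpa [ContinuousLinearMap.add_apply, ContinuousLinearMap.smul_apply,
      ContinuousLinearMap.comp_apply, ContinuousLinearMap.one_apply] using h1
  -- the action of C on inner products
  have hCinner : ∀ (j : ℕ) (z : H), ⟪hv j, C z⟫ = sigs j ^ 2 * ⟪hv j, z⟫ := by
    intro j z
    have h1 : ⟪hv j, C z⟫ = ⟪C (hv j), z⟫ := by
      rw [hCdef]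
      show ⟪hv j, adjoint S (S z)⟫ = ⟪adjoint S (S (hv j)), z⟫
      rw [ContinuousLinearMap.adjoint_inner_right, ContinuousLinearMap.adjoint_inner_left]
    rw [h1, hCapp j, real_inner_smul_left]
  -- coefficients of W x
  have hWcoef : ∀ (j : ℕ) (x : H), ⟪hv j, W x⟫ = ⟪adjoint T (hv j), x⟫ / (sigs j ^ 2 + γ) := by
    intro j x
    have h1 : ⟪hv j, T x⟫ = (sigs j ^ 2 + γ) * ⟪hv j, W x⟫ := by
      rw [← hWapp x, inner_add_right, hCinner, real_inner_smul_right]; ring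
    rw [eq_div_iff (hγ2 j).ne', ContinuousLinearMap.adjoint_inner_left, h1]; ring
  -- common bound for the operator norm of W
  have main12 : ∀ M : ℝ, 0 ≤ M →
      (∀ j, (sigs j ^ 2) ^ (1 + α) * ((sigs j ^ 2 + γ) ^ 2)⁻¹ ≤ M) →
      ‖W‖ ≤ a * Real.sqrt M := by
    intro M hM0 hM
    refine ContinuousLinearMap.opNorm_le_bound _
      (mul_nonneg ha.le (Real.sqrt_nonneg _)) fun x => ?_
    have hexp := my_hasSum_inner hONh hcomplete (W x) (W x)
    have hterm : (fun j => ⟪hv j, W x⟫ * ⟪hv j, W x⟫)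
        = fun j => ((sigs j ^ 2 + γ) ^ 2)⁻¹ * ⟪adjoint T (hv j), x⟫ ^ 2 := by
      funext j
      have hne := (hγ2 j).ne'
      rw [hWcoef]
      field_simp
    rw [hterm] at hexp
    have hsum_le : ⟪W x, W x⟫ ≤ a ^ 2 * M * ‖x‖ ^ 2 := by
      rw [← hexp.tsum_eq]
      exact Summable.tsum_le_of_sum_le hexp.summable fun F =>
        my_key_sum_bound T hONh sigs α a hRC (fun j => ((sigs j ^ 2 + γ) ^ 2)⁻¹)
          (fun j => by positivity) M hM0 hM x F
    rw [real_inner_self_eq_norm_sq] at hsum_le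
    exact my_sqrt_bound ha.le hM0 (norm_nonneg x) hsum_le
  refine ⟨?_, ?_, ?_⟩
  · -- part 1 : α ≥ 1
    intro h1α
    have hb1 := main12 (cH ^ (α - 1)) (Real.rpow_nonneg hcH0 _)
      (fun j => my_M1 (sq_nonneg _) (hsig_le j) hγ h1α)
    rwa [Real.sqrt_eq_rpow, ← Real.rpow_mul hcH0,
      show (α - 1) * (1/2) = (α - 1)/2 by ring] at hb1
  · -- part 2 : α ≤ 1
    intro h1α
    have hb2 := main12 (γ ^ (α - 1)) (Real.rpow_nonneg hγ.le _)
      (fun j => my_M2 (sq_nonneg _) hγ hα0 h1α)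
    rwa [Real.sqrt_eq_rpow, ← Real.rpow_mul hγ.le,
      show (α - 1) * (1/2) = (α - 1)/2 by ring] at hb2
  · -- part 3
    refine ContinuousLinearMap.opNorm_le_bound _
      (add_nonneg (mul_nonneg ha.le (Real.rpow_nonneg hγ.le _)) (norm_nonneg _)) fun h => ?_
    set u : Lp ℝ 2 π := A (S h) - S (W h) with hu
    set τ : ℕ → ℝ := fun j => if sigs j = 0 then 0
      else γ * ⟪adjoint T (hv j), h⟫ / (sigs j * (sigs j ^ 2 + γ)) with hτdef
    set w3 : ℕ → ℝ := fun j => if sigs j = 0 then 0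
      else γ ^ 2 * (sigs j ^ 2 * (sigs j ^ 2 + γ) ^ 2)⁻¹ with hw3def
    have hw3nn : ∀ j, 0 ≤ w3 j := by
      intro j
      by_cases hj : sigs j = 0
      · simp only [hw3def, if_pos hj]; exact le_refl _
      · simp only [hw3def, if_neg hj]
        positivity
    have hτsq : ∀ j, τ j ^ 2 = w3 j * ⟪adjoint T (hv j), h⟫ ^ 2 := by
      intro j
      by_cases hj : sigs j = 0
      · simp only [hτdef, hw3def, if_pos hj]; ring
      · simp only [hτdef, hw3def, if_neg hj]
        have hs0 : sigs j ≠ 0 := hj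
        have hne := (hγ2 j).ne'
        field_simp
    have hM3 : ∀ j, (sigs j ^ 2) ^ (1 + α) * w3 j ≤ γ ^ α := by
      intro j
      by_cases hj : sigs j = 0
      · simp only [hw3def, if_pos hj, mul_zero]
        positivity
      · simp only [hw3def, if_neg hj]
        have hspos : 0 < sigs j ^ 2 := pow_pos (lt_of_le_of_ne (hsig0 j) (Ne.symm hj)) 2
        exact my_M3 hspos hγ hα0 hα2
    have hFbound : ∀ F : Finset ℕ, ∑ j ∈ F, τ j ^ 2 ≤ a ^ 2 * γ ^ α * ‖h‖ ^ 2 := by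
      intro F
      calc ∑ j ∈ F, τ j ^ 2 = ∑ j ∈ F, w3 j * ⟪adjoint T (hv j), h⟫ ^ 2 :=
            Finset.sum_congr rfl fun j _ => hτsq j
        _ ≤ _ := my_key_sum_bound T hONh sigs α a hRC w3 hw3nn (γ ^ α)
            (Real.rpow_nonneg hγ.le _) hM3 h F
    have hτsum : Summable fun j => τ j ^ 2 :=
      summable_of_sum_le (fun j => sq_nonneg _) hFbound
    have hysum : Summable fun j => τ j • ℓv j := my_ortho_summable hONl hτsum
    set y : Lp ℝ 2 π := ∑' j, τ j • ℓv j with hydef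
    have hhy : HasSum (fun j => τ j • ℓv j) y := hysum.hasSum
    -- coefficients of y
    have hycoef : ∀ j, ⟪ℓv j, y⟫ = τ j := by
      intro j
      have h1 := hhy.mapL (innerSL ℝ (ℓv j))
      have h2 : (fun k => (innerSL ℝ (ℓv j)) (τ k • ℓv k)) = fun k => if k = j then τ j else 0 := by
        funext k
        simp only [innerSL_apply_apply, real_inner_smul_right, orthonormal_iff_ite.mp hONl]
        rcases eq_or_ne j k with rfl | hjk
        · simp
        · simp [hjk, Ne.symm hjk]
      rw [h2] at h1
      exact (h1.unique (hasSum_ite_eq j (τ j)))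
    -- norm bound for y
    have hynorm : ‖y‖ ≤ a * γ ^ (α / 2) * ‖h‖ := by
      have h1 := hhy.mapL (innerSL ℝ y)
      have h2 : (fun j => (innerSL ℝ y) (τ j • ℓv j)) = fun j => τ j ^ 2 := by
        funext j
        simp only [innerSL_apply_apply, real_inner_smul_right]
        rw [real_inner_comm, hycoef j]; ring
      rw [h2] at h1
      simp only [innerSL_apply_apply] at h1
      have h3 : ⟪y, y⟫ ≤ a ^ 2 * γ ^ α * ‖h‖ ^ 2 := by
        rw [← h1.tsum_eq]
        exact Summable.tsum_le_of_sum_le hτsum hFbound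
      rw [real_inner_self_eq_norm_sq] at h3
      have h4 := my_sqrt_bound ha.le (Real.rpow_nonneg hγ.le α) (norm_nonneg h) h3
      rwa [Real.sqrt_eq_rpow, ← Real.rpow_mul hγ.le,
        show α * (1/2) = α/2 by ring] at h4
    -- orthogonality of u - y to range S
    have huy : ∀ g : H, ⟪S g, u - y⟫ = 0 := by
      intro g
      have e1 : ⟪S g, A (S h)⟫ = ⟪g, T h⟫ := by
        rw [hTdef, ContinuousLinearMap.comp_apply, ContinuousLinearMap.comp_apply,
          ContinuousLinearMap.adjoint_inner_right]
      have e2 : ⟪S g, S (W h)⟫ = ⟪g, T h⟫ - γ * ⟪g, W h⟫ := by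
        have hCW : C (W h) = T h - γ • W h := eq_sub_of_add_eq (hWapp h)
        have e21 : ⟪S g, S (W h)⟫ = ⟪g, C (W h)⟫ := by
          rw [hCdef, ContinuousLinearMap.comp_apply, ContinuousLinearMap.adjoint_inner_right]
        rw [e21, hCW, inner_sub_right, real_inner_smul_right]
      have hu1 : ⟪S g, u⟫ = γ * ⟪W h, g⟫ := by
        rw [hu, inner_sub_right, e1, e2, real_inner_comm (W h) g]
        ring
      have hy1 : ⟪S g, y⟫ = γ * ⟪W h, g⟫ := by
        have h1 := hhy.mapL (innerSL ℝ (S g))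
        have h2 := (my_hasSum_inner hONh hcomplete (W h) g).mul_left γ
        have heq : (fun j => (innerSL ℝ (S g)) (τ j • ℓv j))
            = fun j => γ * (⟪hv j, W h⟫ * ⟪hv j, g⟫) := by
          funext j
          simp only [innerSL_apply_apply, real_inner_smul_right]
          have e3 : ⟪S g, ℓv j⟫ = sigs j * ⟪hv j, g⟫ := by
            rw [real_inner_comm, ← ContinuousLinearMap.adjoint_inner_left, hsvd' j,
              real_inner_smul_left]
          rw [e3, hWcoef j h]
          by_cases hj : sigs j = 0
          · have hD : ⟪adjoint T (hv j), h⟫ = 0 := by rw [hd0 j hj]; exact inner_zero_left h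
            simp only [hτdef, if_pos hj, hj, hD]
            ring
          · simp only [hτdef, if_neg hj]
            have hs0 : sigs j ≠ 0 := hj
            have hne := (hγ2 j).ne'
            field_simp
        rw [heq] at h1
        exact h1.unique h2
      rw [inner_sub_right, hu1, hy1, sub_self]
    -- P fixes range S and its closure
    have hPsa' : ∀ x z : Lp ℝ 2 π, ⟪P x, z⟫ = ⟪x, P z⟫ := by
      intro x z
      conv_lhs => rw [← hPsa.adjoint_eq]
      rw [ContinuousLinearMap.adjoint_inner_left]
    have hPP : ∀ z : Lp ℝ 2 π, P (P z) = P z := by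
      intro z
      have := ContinuousLinearMap.ext_iff.mp hPidem z
      simpa using this
    have hrangeS_fix : ∀ g : H, P (S g) = S g := by
      intro g
      have hmem : S g ∈ LinearMap.range (P : Lp ℝ 2 π →ₗ[ℝ] Lp ℝ 2 π) := by
        rw [hPrange]
        exact Submodule.le_topologicalClosure _ ⟨g, rfl⟩
      obtain ⟨z, hz⟩ := hmem
      rw [← hz]; exact hPP z
    have hclos : ∀ v ∈ closure ((LinearMap.range (S : H →ₗ[ℝ] Lp ℝ 2 π) : Submodule ℝ (Lp ℝ 2 π)) : Set (Lp ℝ 2 π)),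
        ⟪v, u - y⟫ = 0 := by
      intro v hv'
      have hset : closure ((LinearMap.range (S : H →ₗ[ℝ] Lp ℝ 2 π) : Submodule ℝ (Lp ℝ 2 π)) : Set (Lp ℝ 2 π))
          ⊆ {v : Lp ℝ 2 π | ⟪v, u - y⟫ = 0} := by
        apply closure_minimal
        · rintro _ ⟨g, rfl⟩
          exact huy g
        · exact isClosed_eq (Continuous.inner continuous_id continuous_const) continuous_const
      exact hset hv'
    have hPuy : P (u - y) = 0 := by
      have hz : P (u - y) ∈ closure ((LinearMap.range (S : H →ₗ[ℝ] Lp ℝ 2 π) : Submodule ℝ (Lp ℝ 2 π)) :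
          Set (Lp ℝ 2 π)) := by
        have hmem : P (u - y) ∈ LinearMap.range (P : Lp ℝ 2 π →ₗ[ℝ] Lp ℝ 2 π) := ⟨u - y, rfl⟩
        rw [hPrange] at hmem
        exact hmem
      have h0 : ⟪P (u - y), P (u - y)⟫ = 0 := by
        calc ⟪P (u - y), P (u - y)⟫ = ⟪u - y, P (P (u - y))⟫ := hPsa' _ _
          _ = ⟪u - y, P (u - y)⟫ := by rw [hPP]
          _ = ⟪P (u - y), u - y⟫ := real_inner_comm _ _
          _ = 0 := hclos _ hz
      exact inner_self_eq_zero.mp h0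
    have hPu : P u = P y := by
      have h1 : P u - P y = 0 := by rw [← map_sub]; exact hPuy
      exact sub_eq_zero.mp h1
    have hPcontr : ‖P y‖ ≤ ‖y‖ := by
      rcases eq_or_ne (P y) 0 with h0 | h0
      · rw [h0, norm_zero]; exact norm_nonneg y
      · have h1 : ⟪P y, P y⟫ ≤ ‖P y‖ * ‖y‖ := by
          calc ⟪P y, P y⟫ = ⟪y, P (P y)⟫ := hPsa' _ _
            _ = ⟪y, P y⟫ := by rw [hPP]
            _ ≤ ‖y‖ * ‖P y‖ := real_inner_le_norm _ _
            _ = ‖P y‖ * ‖y‖ := mul_comm _ _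
        rw [real_inner_self_eq_norm_sq] at h1
        have hn : 0 < ‖P y‖ := norm_pos_iff.mpr h0
        nlinarith
    have hdecomp : (A ∘L S - S ∘L W) h = (A (S h) - P (A (S h))) + P u := by
      have hPu' : P u = P (A (S h)) - S (W h) := by
        rw [hu, map_sub, hrangeS_fix (W h)]
      simp only [ContinuousLinearMap.sub_apply, ContinuousLinearMap.comp_apply]
      rw [hPu']
      abel
    calc ‖(A ∘L S - S ∘L W) h‖ ≤ ‖A (S h) - P (A (S h))‖ + ‖P u‖ := by
          rw [hdecomp]; exact norm_add_le _ _
      _ ≤ ‖A ∘L S - P ∘L (A ∘L S)‖ * ‖h‖ + a * γ ^ (α / 2) * ‖h‖ := by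
          refine add_le_add ?_ ?_
          · have h1 := (A ∘L S - P ∘L (A ∘L S)).le_opNorm h
            simpa [ContinuousLinearMap.sub_apply, ContinuousLinearMap.comp_apply] using h1
          · rw [hPu]; exact hPcontr.trans hynorm
      _ = (a * γ ^ (α / 2) + ‖A ∘L S - P ∘L (A ∘L S)‖) * ‖h‖ := by ring
end
end
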